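/- Consider the decomposition process on KLM sequences: the cleaning step produces from ξ₀ sequences ξ with rank(ξ) ≤_lex rank(ξ₀) and size(ξ) ≤ g(size(ξ₀)) where g(x) = x^x, and each decomposition step replaces ξ by sequences ξ' with rank(ξ') <_lex rank(ξ) and size(ξ') ≤ h(size(ξ)) where h(x) = x^{x^{1+x}}. Identify the rank (r_d,…,r_0) ∈ ℕ^{d+1} of a KLM sequence with the ordinal α = ω^d·r_d + ⋯ + ω^0·r_0 < ω^{d+1}, and suppose the size of the ordinal (max of d and the coefficients r_i) is bounded by the size of the KLM sequence. Then along any branch of a decomposition forest rooted at a cleaning of ξ₀, the sequence of ordinal ranks α_{ξ'_0} > α_{ξ₁} > α_{ξ₂} > ⋯ is a strictly descending sequence of ordinals below ω^{d+1} that is (g(size(ξ₀)), h)-controlled, i.e., the size of the j-th ordinal is at most h^j(g(size(ξ₀))); consequently, by the length function theorem, the branch has length at most h_{ω^{d+1}}(g(size(ξ₀))) (the Cichoń function relative to h), provided g(size(ξ₀)) ≥ d + 1. -/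

import Mathlib

/-!
Ordinals `α < ω^ω` are represented in Cantor normal form by their list of
coefficients, least significant first.  `CichonEqs h C` says that `C` is the
Cichoń hierarchy relative to `h` (with the standard fundamental sequences).
-/

/-- `C` satisfies the defining equations of the Cichoń hierarchy relative to
`h`: `h_0(x) = 0`, `h_{α+1}(x) = 1 + h_α(h(x))`, and `h_λ(x) = h_{λ(x)}(x)`
where for a limit `λ = β + ω^{k+1}` in CNF, `λ(x) = β + ω^k·(x+1)`. -/
def CichonEqs (h : ℕ → ℕ) (C : List ℕ → ℕ → ℕ) : Prop :=
  (∀ m x, C (List.replicate m 0) x = 0) ∧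
  (∀ c l x, C ((c + 1) :: l) x = 1 + C (c :: l) (h x)) ∧
  (∀ k c r x, C (List.replicate (k + 1) 0 ++ (c + 1) :: r) x
      = C (List.replicate k 0 ++ (x + 1) :: c :: r) x)

/-- Strict lexicographic order on `ℕ^{d+1}`, most significant coordinate at
the largest index. -/
def LexLt {d : ℕ} (r s : Fin (d + 1) → ℕ) : Prop :=
  ∃ i, r i < s i ∧ ∀ j, i < j → r j = s j

/-- The cleaning bound `g(x) = x^x`. -/
def gClean (x : ℕ) : ℕ := x ^ x

/-- The decomposition bound `h(x) = x^{x^{1+x}}`. -/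
def hDec (x : ℕ) : ℕ := x ^ x ^ (1 + x)

/-- The ordinal `ω^d·r_d + ⋯ + ω^0·r_0` associated with the rank
`(r_d, …, r_0)` of a KLM sequence. -/
noncomputable def ordOf {d : ℕ} (r : Fin (d + 1) → ℕ) : Ordinal :=
  (((List.finRange (d + 1)).reverse).map
    (fun (i : Fin (d + 1)) => Ordinal.omega0 ^ (i : ℕ) * (r i : Ordinal))).sum

open Ordinal
universe u
noncomputable def lval : List ℕ → Ordinal.{0}
  | [] => 0
  | a :: l => Ordinal.omega0 * lval l + a
@[simp] lemma lval_nil : lval [] = 0 := rfl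
@[simp] lemma lval_cons (a : ℕ) (l : List ℕ) :
    lval (a :: l) = Ordinal.omega0 * lval l + a := rfl
@[simp] lemma lval_replicate (m : ℕ) : lval (List.replicate m 0) = 0 := by
  induction m with
  | zero => rfl
  | succ n ih => simp [List.replicate_succ, ih]
lemma lval_succ_head (c : ℕ) (l : List ℕ) :
    lval ((c + 1) :: l) = lval (c :: l) + 1 := by
  simp [lval_cons, add_assoc]
lemma lval_cons_lt_cons {l m : List ℕ} (h : lval l < lval m) (a b : ℕ) :
    lval (a :: l) < lval (b :: m) := by
  calc Ordinal.omega0 * lval l + a < Ordinal.omega0 * lval l + Ordinal.omega0 :=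
        add_lt_add_right (nat_lt_omega0 a) _
  _ = Ordinal.omega0 * (lval l + 1) := (mul_add_one _ _).symm
  _ ≤ Ordinal.omega0 * lval m := by
        apply mul_le_mul_right
        rw [Ordinal.add_one_eq_succ]
        exact Order.succ_le_of_lt h
  _ ≤ Ordinal.omega0 * lval m + b := le_self_add

lemma lval_zero_head (c : ℕ) (r : List ℕ) :
    lval (0 :: (c + 1) :: r) = Ordinal.omega0 * lval (c :: r) + Ordinal.omega0 := by
  rw [lval_cons, lval_succ_head, mul_add_one, Nat.cast_zero, add_zero]

lemma lval_fresh_head (x c : ℕ) (r : List ℕ) :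
    lval ((x + 1) :: c :: r) = Ordinal.omega0 * lval (c :: r) + ((x : Ordinal) + 1) := by
  rw [lval_cons, Nat.cast_succ]

lemma lval_pos (k c : ℕ) (r : List ℕ) :
    0 < lval (List.replicate k 0 ++ (c + 1) :: r) := by
  induction k with
  | zero =>
    rw [List.replicate_zero, List.nil_append, lval_cons]
    have h0 : (0:Ordinal) < ((c + 1 : ℕ) : Ordinal) := by exact_mod_cast Nat.succ_pos c
    exact h0.trans_le (le_add_self)
  | succ k ih =>
    rw [List.replicate_succ, List.cons_append, lval_cons, Nat.cast_zero, add_zero]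
    exact mul_pos omega0_pos ih

lemma lval_fund_lt (k c x : ℕ) (r : List ℕ) :
    lval (List.replicate k 0 ++ (x + 1) :: c :: r)
      < lval (List.replicate (k + 1) 0 ++ (c + 1) :: r) := by
  induction k with
  | zero =>
    rw [List.replicate_zero, List.nil_append, List.replicate_succ, List.replicate_zero,
      List.cons_append, List.nil_append, lval_zero_head, lval_fresh_head]
    exact add_lt_add_right (by exact_mod_cast nat_lt_omega0 (x+1)) _
  | succ k ih =>
    rw [List.replicate_succ, List.cons_append,
      show List.replicate (k+1+1) 0 = 0 :: List.replicate (k+1) 0 from List.replicate_succ ..,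
      List.cons_append]
    exact lval_cons_lt_cons ih 0 0

lemma lval_comb : ∀ (k : ℕ) (u : List ℕ) {c x : ℕ} {r : List ℕ},
    (∀ a ∈ u, a ≤ x) →
    lval u < lval (List.replicate (k + 1) 0 ++ (c + 1) :: r) →
    lval u < lval (List.replicate k 0 ++ (x + 1) :: c :: r) := by
  intro k
  induction k with
  | zero =>
    rintro (_ | ⟨a, u'⟩) c x r hn hlt
    · rw [lval_nil]; exact lval_pos 0 x (c :: r)
    · rw [List.replicate_succ, List.replicate_zero, List.cons_append, List.nil_append,
        lval_zero_head] at hlt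
      rw [List.replicate_zero, List.nil_append, lval_fresh_head, lval_cons]
      rw [lval_cons] at hlt
      have hu' : lval u' ≤ lval (c :: r) := by
        by_contra hgt
        push_neg at hgt
        have h1 : Ordinal.omega0 * (lval (c::r) + 1) ≤ Ordinal.omega0 * lval u' := by
          apply mul_le_mul_right
          rw [Ordinal.add_one_eq_succ]; exact Order.succ_le_of_lt hgt
        rw [mul_add_one] at h1
        exact absurd hlt (not_lt.2 (le_trans h1 (le_self_add)))
      rcases lt_or_eq_of_le hu' with h | h
      · calc Ordinal.omega0 * lval u' + a < Ordinal.omega0 * lval u' + Ordinal.omega0 :=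
              add_lt_add_right (nat_lt_omega0 a) _
        _ = Ordinal.omega0 * (lval u' + 1) := (mul_add_one _ _).symm
        _ ≤ Ordinal.omega0 * lval (c :: r) := by
              apply mul_le_mul_right
              rw [Ordinal.add_one_eq_succ]; exact Order.succ_le_of_lt h
        _ ≤ Ordinal.omega0 * lval (c :: r) + ((x:Ordinal) + 1) :=
              le_self_add
      · rw [h]
        apply add_lt_add_right
        calc (a : Ordinal) ≤ (x : Ordinal) := Nat.cast_le.2 (hn a (by simp))
        _ < (x : Ordinal) + 1 := lt_add_one _
  | succ k ih =>
    rintro (_ | ⟨a, u'⟩) c x r hn hlt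
    · rw [List.replicate_succ, List.cons_append, lval_nil, lval_cons, Nat.cast_zero, add_zero]
      exact mul_pos omega0_pos (lval_pos k x (c :: r))
    · rw [List.replicate_succ, List.cons_append, lval_cons (0:ℕ), Nat.cast_zero, add_zero]
      rw [show List.replicate (k+1+1) 0 = 0 :: List.replicate (k+1) 0 from List.replicate_succ ..,
        List.cons_append, lval_cons (0:ℕ), Nat.cast_zero, add_zero, lval_cons] at hlt
      have hu' : lval u' < lval (List.replicate (k+1) 0 ++ (c+1) :: r) := by
        rcases lt_or_ge (lval u') (lval (List.replicate (k+1) 0 ++ (c+1) :: r)) with h | h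
        · exact h
        · exfalso
          have h2 : Ordinal.omega0 * lval (List.replicate (k+1) 0 ++ (c+1) :: r)
              ≤ Ordinal.omega0 * lval u' := mul_le_mul_right h _
          exact absurd hlt (not_lt.2 (le_trans h2 (le_self_add)))
      have hcomb := ih u' (fun b hb => hn b (by simp [hb])) hu'
      rw [lval_cons]
      calc Ordinal.omega0 * lval u' + a < Ordinal.omega0 * lval u' + Ordinal.omega0 :=
            add_lt_add_right (nat_lt_omega0 a) _
      _ = Ordinal.omega0 * (lval u' + 1) := (mul_add_one _ _).symm
      _ ≤ Ordinal.omega0 * lval (List.replicate k 0 ++ (x + 1) :: c :: r) := by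
            apply mul_le_mul_right
            rw [Ordinal.add_one_eq_succ]; exact Order.succ_le_of_lt hcomb
lemma lval_le_of_forall₂ {u v : List ℕ} (h : List.Forall₂ (· ≤ ·) u v) :
    lval u ≤ lval v := by
  induction h with
  | nil => exact le_rfl
  | cons hab htl ih =>
    exact add_le_add (mul_le_mul_right ih _) (Nat.cast_le.2 hab)

lemma lval_inj : ∀ {u v : List ℕ}, u.length = v.length → lval u = lval v → u = v
  | [], [], _, _ => rfl
  | [], _ :: _, hl, _ => by simp at hl
  | _ :: _, [], hl, _ => by simp at hl
  | a :: u, b :: v, hl, he => by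
    have hlen : u.length = v.length := by simpa using hl
    have huv : lval u = lval v := by
      rcases lt_trichotomy (lval u) (lval v) with h | h | h
      · exact absurd he (ne_of_lt (lval_cons_lt_cons h a b))
      · exact h
      · exact absurd he.symm (ne_of_lt (lval_cons_lt_cons h b a))
    have hab : (a : Ordinal) = b := by
      have h2 := he
      rw [lval_cons, lval_cons, huv] at h2
      exact (add_right_inj _).1 h2
    rw [lval_inj hlen huv, Nat.cast_injective hab]

lemma lval_lt_omega0_pow (l : List ℕ) : lval l < Ordinal.omega0 ^ l.length := by
  induction l with
  | nil => simp
  | cons a l ih =>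
    calc Ordinal.omega0 * lval l + a < Ordinal.omega0 * lval l + Ordinal.omega0 :=
          add_lt_add_right (nat_lt_omega0 a) _
    _ = Ordinal.omega0 * (lval l + 1) := (mul_add_one _ _).symm
    _ ≤ Ordinal.omega0 * Ordinal.omega0 ^ l.length := by
          apply mul_le_mul_right
          rw [Ordinal.add_one_eq_succ]
          exact Order.succ_le_of_lt ih
    _ = Ordinal.omega0 ^ (a :: l).length := by
          rw [List.length_cons, pow_succ']
lemma list_form (l : List ℕ) :
    l = List.replicate l.length 0 ∨ ∃ k c r, l = List.replicate k 0 ++ (c + 1) :: r := by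
  induction l with
  | nil => left; rfl
  | cons a t ih =>
    cases a with
    | zero =>
      rcases ih with h | ⟨k, c, r, h⟩
      · left; rw [List.length_cons, List.replicate_succ]; exact congrArg _ h
      · right; exact ⟨k + 1, c, r, by rw [List.replicate_succ, List.cons_append]; exact congrArg _ h⟩
    | succ c => right; exact ⟨0, c, t, rfl⟩

lemma forall₂_refl_le (l : List ℕ) : List.Forall₂ (· ≤ ·) l l :=
  List.forall₂_same.2 (fun _ _ => le_rfl)

lemma forall₂_peel_zeros : ∀ (n : ℕ) {u v : List ℕ},
    List.Forall₂ (· ≤ ·) (List.replicate n 0 ++ u) (List.replicate n 0 ++ v) →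
    List.Forall₂ (· ≤ ·) u v := by
  intro n
  induction n with
  | zero => intro u v h; simpa using h
  | succ n ih =>
    intro u v h
    simp only [List.replicate_succ, List.cons_append] at h
    exact ih (List.forall₂_cons.1 h).2

lemma forall₂_build_zeros : ∀ (n : ℕ) {u v : List ℕ},
    List.Forall₂ (· ≤ ·) u v →
    List.Forall₂ (· ≤ ·) (List.replicate n 0 ++ u) (List.replicate n 0 ++ v) := by
  intro n
  induction n with
  | zero => intro u v h; simpa using h
  | succ n ih =>
    intro u v h
    simp only [List.replicate_succ, List.cons_append]
    exact List.Forall₂.cons le_rfl (ih h)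

lemma aux_j_le_k : ∀ (j k c b : ℕ) (r s : List ℕ),
    List.Forall₂ (· ≤ ·) (List.replicate k 0 ++ (c + 1) :: r)
      (List.replicate j 0 ++ (b + 1) :: s) → j ≤ k := by
  intro j
  induction j with
  | zero => intros; exact Nat.zero_le _
  | succ j ih =>
    intro k c b r s h
    cases k with
    | zero =>
      rw [List.replicate_zero, List.nil_append, List.replicate_succ, List.cons_append] at h
      exact absurd (List.forall₂_cons.1 h).1 (by omega)
    | succ k =>
      simp only [List.replicate_succ, List.cons_append] at h
      exact Nat.succ_le_succ (ih k c b r s (List.forall₂_cons.1 h).2)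

@[simp] lemma lval_append_zero : ∀ (l : List ℕ), lval (l ++ [0]) = lval l := by
  intro l
  induction l with
  | nil => simp [lval_cons]
  | cons a t ih => rw [List.cons_append, lval_cons, ih, lval_cons]

lemma lval_append_replicate (m : ℕ) (l : List ℕ) :
    lval (List.replicate m 0 ++ l) = Ordinal.omega0 ^ m * lval l := by
  induction m with
  | zero => simp
  | succ m ih =>
    rw [List.replicate_succ, List.cons_append, lval_cons, ih, Nat.cast_zero, add_zero,
      pow_succ', mul_assoc]
lemma lval_ofFn_succ {n : ℕ} (r : Fin (n + 1) → ℕ) :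
    lval (List.ofFn r) = Ordinal.omega0 * lval (List.ofFn (fun i : Fin n => r i.succ)) + r 0 := by
  rw [List.ofFn_succ]; rfl

lemma lval_lt_of_lexLt : ∀ {d : ℕ} {r s : Fin (d + 1) → ℕ}, LexLt r s →
    lval (List.ofFn r) < lval (List.ofFn s) := by
  intro d
  induction d with
  | zero =>
    rintro r s ⟨i, hi, -⟩
    have h0 : i = 0 := Fin.eq_zero i
    subst h0
    rw [lval_ofFn_succ r, lval_ofFn_succ s]
    exact add_lt_add_right (Nat.cast_lt.2 hi) _
  | succ d ih =>
    rintro r s ⟨i, hi, hab⟩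
    rw [lval_ofFn_succ r, lval_ofFn_succ s]
    rcases Fin.eq_zero_or_eq_succ i with h0 | ⟨i', hi'⟩
    · subst h0
      have htail : (List.ofFn fun j : Fin (d+1) => r j.succ)
          = (List.ofFn fun j : Fin (d+1) => s j.succ) := by
        congr 1
        exact funext fun j => hab j.succ (Fin.succ_pos j)
      rw [htail]
      exact add_lt_add_right (Nat.cast_lt.2 hi) _
    · subst hi'
      have htl : lval (List.ofFn fun j : Fin (d+1) => r j.succ)
          < lval (List.ofFn fun j : Fin (d+1) => s j.succ) := by
        apply ih
        exact ⟨i', hi, fun j hj => hab j.succ (by simpa [Fin.succ_lt_succ_iff] using hj)⟩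
      calc Ordinal.omega0 * lval (List.ofFn fun j : Fin (d+1) => r j.succ) + (r 0 : ℕ)
          = lval ((r 0 : ℕ) :: List.ofFn fun j : Fin (d+1) => r j.succ) := rfl
        _ < lval ((s 0 : ℕ) :: List.ofFn fun j : Fin (d+1) => s j.succ) :=
            lval_cons_lt_cons htl _ _
        _ = _ := rfl

lemma list_sum_mul_left (c : Ordinal) : ∀ (l : List Ordinal),
    (l.map (fun a => c * a)).sum = c * l.sum := by
  intro l
  induction l with
  | nil => simp
  | cons a t ih => simp [ih, mul_add]

lemma ordOf_aux : ∀ (n : ℕ) (r : Fin n → ℕ),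
    (((List.finRange n).reverse).map
      (fun i : Fin n => Ordinal.omega0 ^ (i : ℕ) * (r i : Ordinal))).sum = lval (List.ofFn r) := by
  intro n
  induction n with
  | zero => simp
  | succ n ih =>
    intro r
    rw [List.finRange_succ, List.reverse_cons, List.map_append, List.sum_append]
    rw [List.map_reverse, List.map_map, ← List.map_reverse]
    have e1 : ((fun i : Fin (n+1) => Ordinal.omega0 ^ (i : ℕ) * (r i : Ordinal)) ∘ Fin.succ)
        = fun i : Fin n => Ordinal.omega0 * (Ordinal.omega0 ^ (i : ℕ) * (r i.succ : Ordinal)) := by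
      funext i
      simp [Function.comp, Fin.val_succ, pow_succ', mul_assoc]
    rw [e1]
    rw [show (List.map (fun i : Fin n => Ordinal.omega0 * (Ordinal.omega0 ^ (i : ℕ) * (r i.succ : Ordinal))) (List.finRange n).reverse)
        = ((List.finRange n).reverse.map (fun i : Fin n => Ordinal.omega0 ^ (i : ℕ) * (r i.succ : Ordinal))).map (fun a => Ordinal.omega0 * a) by
      rw [List.map_map]; rfl]
    rw [list_sum_mul_left, ih (fun i => r i.succ)]
    simp [List.ofFn_succ, lval_cons]

lemma ordOf_eq_lval {d : ℕ} (r : Fin (d + 1) → ℕ) : ordOf r = lval (List.ofFn r) := by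
  have e : ordOf r = (((List.finRange (d+1)).reverse).map
      (fun i : Fin (d+1) => Ordinal.omega0 ^ (i : ℕ) * (r i : Ordinal))).sum := by
    unfold ordOf
    rfl
  rw [e]
  exact ordOf_aux (d + 1) r
lemma repl_split (m n : ℕ) (l : List ℕ) :
    List.replicate (m + n) 0 ++ l = List.replicate m 0 ++ (List.replicate n (0:ℕ) ++ l) := by
  rw [List.replicate_add, List.append_assoc]

lemma PL {h : ℕ → ℕ} {C : List ℕ → ℕ → ℕ} (hC : CichonEqs h C)
    (hm : Monotone h) (hi : ∀ x, x ≤ h x) :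
    ∀ (v u : List ℕ) (x y : ℕ), List.Forall₂ (· ≤ ·) u v →
      (∀ a ∈ u, a ≤ x + 1) → x ≤ y → C u x ≤ C v y := by
  obtain ⟨hZ, hS, hL⟩ := hC
  suffices H : ∀ o : Ordinal.{0}, ∀ (v u : List ℕ) (x y : ℕ), lval v = o →
      List.Forall₂ (· ≤ ·) u v → (∀ a ∈ u, a ≤ x + 1) → x ≤ y → C u x ≤ C v y by
    exact fun v u x y h1 h2 h3 => H (lval v) v u x y rfl h1 h2 h3
  intro o
  induction o using Ordinal.induction with
  | h o IH =>
  intro v u x y hvo huv hn hxy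
  subst hvo
  rcases list_form u with hu | ⟨k, c', r', hu⟩
  · rw [hu, hZ]; exact Nat.zero_le _
  subst hu
  cases k with
  | zero =>
    simp only [List.replicate_zero, List.nil_append] at huv hn ⊢
    cases huv with
    | cons hab htl =>
      rename_i b t
      cases b with
      | zero => omega
      | succ c =>
        rw [hS c' r' x, hS c t y]
        apply add_le_add_right
        refine IH (lval (c :: t)) ?_ (c :: t) (c' :: r') (h x) (h y) rfl
          (List.Forall₂.cons (by omega) htl) ?_ (hm hxy)
        · rw [lval_succ_head]; exact lt_add_one _
        · intro a ha
          rcases List.mem_cons.1 ha with rfl | ha2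
          · have := hn (a + 1) (by simp)
            have := hi x
            omega
          · have := hn a (by simp [ha2])
            have := hi x
            omega
  | succ k =>
    have hu2 : List.replicate (k+1) 0 ++ (c' + 1) :: r'
        = 0 :: (List.replicate k 0 ++ (c' + 1) :: r') := by
      rw [List.replicate_succ, List.cons_append]
    rw [hu2] at huv hn ⊢
    cases huv with
    | cons hab htl =>
      rename_i b t
      cases b with
      | succ B =>
        rw [hS B t y]
        refine le_trans (IH (lval (B :: t)) ?_ (B :: t)
          (0 :: (List.replicate k 0 ++ (c' + 1) :: r')) x (h y) rfl
          (List.Forall₂.cons (Nat.zero_le _) htl) hn (hxy.trans (hi y))) (Nat.le_add_left _ 1)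
        rw [lval_succ_head]; exact lt_add_one _
      | zero =>
        rcases list_form (0 :: t) with hv | ⟨kv, bv, s, hv⟩
        · exfalso
          have h1 : lval (0 :: (List.replicate k 0 ++ (c' + 1) :: r')) ≤ lval (0 :: t) :=
            lval_le_of_forall₂ (List.Forall₂.cons le_rfl htl)
          rw [hv, lval_replicate] at h1
          have h2 : (0:Ordinal) < lval (0 :: (List.replicate k 0 ++ (c' + 1) :: r')) := by
            have := lval_pos (k+1) c' r'
            rwa [hu2] at this
          exact absurd (h2.trans_le h1) (lt_irrefl 0)
        · cases kv with
          | zero =>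
            exfalso
            rw [List.replicate_zero, List.nil_append] at hv
            exact absurd (congrArg (List.headI) hv) (by simp)
          | succ j =>
            have hF : List.Forall₂ (· ≤ ·)
                (List.replicate (k+1) 0 ++ (c' + 1) :: r')
                (List.replicate (j+1) 0 ++ (bv + 1) :: s) := by
              rw [hu2, ← hv]
              exact List.Forall₂.cons le_rfl htl
            have hjk : j + 1 ≤ k + 1 := aux_j_le_k (j+1) (k+1) c' bv r' s hF
            rw [hv, hL j bv s y]
            rcases Nat.lt_or_ge j k with hjlt | hjge
            · -- j < k : keep u
              have hw : (0 : ℕ) :: (List.replicate k 0 ++ (c' + 1) :: r')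
                  = List.replicate j 0 ++ (0 :: (0 :: (List.replicate (k-j-1) 0 ++ (c'+1) :: r'))) := by
                rw [← hu2, show k + 1 = j + (1 + ((k - j - 1) + 1)) from by omega, repl_split,
                  repl_split 1]
                try rfl
                try (congr 2; rw [List.replicate_succ, List.cons_append])
                try rfl
              have hpeel : List.Forall₂ (· ≤ ·)
                  (0 :: (List.replicate (k-j-1) 0 ++ (c'+1) :: r')) ((bv + 1) :: s) := by
                have hF2 := hF
                rw [show List.replicate (k+1) (0:ℕ) ++ (c' + 1) :: r'
                    = List.replicate (j+1) 0 ++ (0 :: (List.replicate (k-j-1) 0 ++ (c'+1) :: r')) from by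
                  rw [show k + 1 = (j+1) + ((k-j-1)+1) from by omega, repl_split]
                  try rfl
                  try (congr 1; rw [List.replicate_succ, List.cons_append])
                  try rfl] at hF2
                exact forall₂_peel_zeros (j+1) hF2
              have htail : List.Forall₂ (· ≤ ·)
                  (List.replicate (k-j-1) 0 ++ (c'+1) :: r') s := (List.forall₂_cons.1 hpeel).2
              have hlt : lval (List.replicate j 0 ++ (y + 1) :: bv :: s) < lval (0 :: t) := by
                rw [hv]; exact lval_fund_lt j bv y s
              have hF3 : List.Forall₂ (· ≤ ·) ((0 : ℕ) :: (List.replicate k 0 ++ (c' + 1) :: r'))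
                  (List.replicate j 0 ++ (y + 1) :: bv :: s) := by
                rw [hw]
                exact forall₂_build_zeros j (List.Forall₂.cons (Nat.zero_le _)
                  (List.Forall₂.cons (Nat.zero_le _) htail))
              exact IH (lval (List.replicate j 0 ++ (y + 1) :: bv :: s)) hlt _ _ x y rfl hF3 hn hxy
            · -- j = k : expand u as well
              have hjk2 : j = k := by omega
              subst hjk2
              have hpeel := forall₂_peel_zeros (j+1) hF
              have hcb : c' + 1 ≤ bv + 1 := (List.forall₂_cons.1 hpeel).1
              have hrs : List.Forall₂ (· ≤ ·) r' s := (List.forall₂_cons.1 hpeel).2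
              rw [← hu2, hL j c' r' x]
              have hlt : lval (List.replicate j 0 ++ (y + 1) :: bv :: s) < lval (0 :: t) := by
                rw [hv]; exact lval_fund_lt j bv y s
              have hF3 : List.Forall₂ (· ≤ ·) (List.replicate j 0 ++ (x + 1) :: c' :: r')
                  (List.replicate j 0 ++ (y + 1) :: bv :: s) :=
                forall₂_build_zeros j (List.Forall₂.cons (by omega)
                  (List.Forall₂.cons (by omega) hrs))
              have hnorm : ∀ a ∈ List.replicate j 0 ++ (x + 1) :: c' :: r', a ≤ x + 1 := by
                intro a ha
                rcases List.mem_append.1 ha with ha2 | ha2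
                · have := List.eq_of_mem_replicate ha2; omega
                · rcases List.mem_cons.1 ha2 with rfl | ha3
                  · omega
                  · rcases List.mem_cons.1 ha3 with he | ha4
                    · have hx1 : c' + 1 ≤ x + 1 := hn (c'+1) (by simp)
                      omega
                    · exact hn a (by simp [ha4])
              exact IH (lval (List.replicate j 0 ++ (y + 1) :: bv :: s)) hlt _ _ x y rfl hF3 hnorm hxy
lemma MLE {h : ℕ → ℕ} {C : List ℕ → ℕ → ℕ} (hC : CichonEqs h C)
    (hm : Monotone h) (hi : ∀ x, x ≤ h x) :
    ∀ (v u : List ℕ) (z w : ℕ), u.length = v.length → lval u ≤ lval v →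
      (∀ a ∈ u, a ≤ z) → z ≤ w → C u z ≤ C v w := by
  have hZ := hC.1
  have hS := hC.2.1
  have hL := hC.2.2
  suffices H : ∀ o : Ordinal.{0}, ∀ (v u : List ℕ) (z w : ℕ), lval v = o →
      u.length = v.length → lval u ≤ lval v → (∀ a ∈ u, a ≤ z) → z ≤ w → C u z ≤ C v w by
    exact fun v u z w h1 h2 h3 h4 => H (lval v) v u z w rfl h1 h2 h3 h4
  intro o
  induction o using Ordinal.induction with
  | h o IH =>
  intro v u z w hvo hlen hle hn hzw
  subst hvo
  rcases eq_or_lt_of_le hle with heq | hlt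
  · have he : u = v := lval_inj hlen heq
    subst he
    exact PL hC hm hi u u z w (forall₂_refl_le u)
      (fun a ha => (hn a ha).trans (Nat.le_succ z)) hzw
  · rcases list_form v with hv | ⟨k, c, r, hv⟩
    · exfalso
      rw [hv, lval_replicate] at hlt
      exact not_lt_zero hlt
    · subst hv
      cases k with
      | zero =>
        simp only [List.replicate_zero, List.nil_append] at hlt hlen ⊢
        rw [hS c r w]
        have hle2 : lval u ≤ lval (c :: r) := by
          rw [lval_succ_head, Ordinal.add_one_eq_succ, Order.lt_succ_iff] at hlt
          exact hlt
        refine le_trans (IH (lval (c :: r)) ?_ (c :: r) u z (h w)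
          rfl (by simpa using hlen) hle2 hn (hzw.trans (hi w))) (Nat.le_add_left _ 1)
        rw [List.replicate_zero, List.nil_append, lval_succ_head]; exact lt_add_one _
      | succ k =>
        rw [hL k c r w]
        have hcomb : lval u < lval (List.replicate k 0 ++ (w + 1) :: c :: r) :=
          lval_comb k u (fun a ha => (hn a ha).trans hzw) hlt
        refine IH (lval (List.replicate k 0 ++ (w + 1) :: c :: r)) (lval_fund_lt k c w r)
          _ u z w rfl ?_ (le_of_lt hcomb) hn hzw
        simp only [List.length_append, List.length_replicate, List.length_cons] at hlen ⊢
        omega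

lemma KEY {h : ℕ → ℕ} {C : List ℕ → ℕ → ℕ} (hC : CichonEqs h C)
    (hm : Monotone h) (hi : ∀ x, x ≤ h x) :
    ∀ (v u : List ℕ) (x : ℕ), u.length = v.length → lval u < lval v →
      (∀ a ∈ u, a ≤ x) → 1 + C u (h x) ≤ C v x := by
  have hS := hC.2.1
  have hL := hC.2.2
  suffices H : ∀ o : Ordinal.{0}, ∀ (v u : List ℕ) (x : ℕ), lval v = o →
      u.length = v.length → lval u < lval v → (∀ a ∈ u, a ≤ x) → 1 + C u (h x) ≤ C v x by
    exact fun v u x h1 h2 h3 => H (lval v) v u x rfl h1 h2 h3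
  intro o
  induction o using Ordinal.induction with
  | h o IH =>
  intro v u x hvo hlen hlt hn
  subst hvo
  rcases list_form v with hv | ⟨k, c, r, hv⟩
  · exfalso
    rw [hv, lval_replicate] at hlt
    exact not_lt_zero hlt
  · subst hv
    cases k with
    | zero =>
      simp only [List.replicate_zero, List.nil_append] at hlt hlen ⊢
      rw [hS c r x]
      apply add_le_add_right
      have hle2 : lval u ≤ lval (c :: r) := by
        rw [lval_succ_head, Ordinal.add_one_eq_succ, Order.lt_succ_iff] at hlt
        exact hlt
      exact MLE hC hm hi (c :: r) u (h x) (h x) (by simpa using hlen) hle2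
        (fun a ha => (hn a ha).trans (hi x)) le_rfl
    | succ k =>
      rw [hL k c r x]
      have hcomb : lval u < lval (List.replicate k 0 ++ (x + 1) :: c :: r) :=
        lval_comb k u hn hlt
      refine IH (lval (List.replicate k 0 ++ (x + 1) :: c :: r)) (lval_fund_lt k c x r)
        _ u x rfl ?_ hcomb hn
      simp only [List.length_append, List.length_replicate, List.length_cons] at hlen ⊢
      omega
lemma hDec_infl : ∀ x, x ≤ hDec x := by
  intro x
  cases x with
  | zero => exact Nat.zero_le _
  | succ n =>
    show n + 1 ≤ (n+1) ^ (n+1) ^ (1 + (n+1))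
    calc n + 1 = (n+1) ^ 1 := (pow_one _).symm
    _ ≤ (n+1) ^ (n+1) ^ (1 + (n+1)) :=
        Nat.pow_le_pow_right (Nat.succ_le_succ (Nat.zero_le n))
          (Nat.one_le_pow _ _ (Nat.succ_pos n))

lemma hDec_mono : Monotone hDec := by
  intro x y hxy
  cases x with
  | zero =>
    cases y with
    | zero => exact le_rfl
    | succ m =>
      show hDec 0 ≤ hDec (m+1)
      have h0 : hDec 0 = 1 := by norm_num [hDec]
      rw [h0]
      exact Nat.one_le_pow _ _ (Nat.succ_pos m)
  | succ n =>
    show (n+1) ^ (n+1) ^ (1 + (n+1)) ≤ y ^ y ^ (1 + y)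
    have h1 : 1 ≤ n + 1 := Nat.succ_le_succ (Nat.zero_le n)
    have h1y : (1:ℕ) ≤ y := le_trans h1 hxy
    calc (n+1) ^ (n+1) ^ (1 + (n+1)) ≤ (n+1) ^ y ^ (1 + y) := by
          apply Nat.pow_le_pow_right h1
          calc (n+1) ^ (1 + (n+1)) ≤ y ^ (1 + (n+1)) := Nat.pow_le_pow_left hxy _
          _ ≤ y ^ (1 + y) := Nat.pow_le_pow_right h1y (by omega)
    _ ≤ y ^ y ^ (1 + y) := Nat.pow_le_pow_left hxy _

lemma lift_list_sum : ∀ l : List Ordinal.{0}, Ordinal.lift.{u} l.sum = (l.map Ordinal.lift.{u}).sum := by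
  intro l; induction l with
  | nil => simp
  | cons a t ih => simp [Ordinal.lift_add, ih]

lemma lift_pow (a : Ordinal.{0}) (n : ℕ) :
    Ordinal.lift.{u} (a ^ n) = (Ordinal.lift.{u} a) ^ n := by
  induction n with
  | zero => simp
  | succ n ih => rw [pow_succ, Ordinal.lift_mul, ih, pow_succ]

lemma ordOf_lift {d : ℕ} (r : Fin (d + 1) → ℕ) :
    ordOf.{u} r = Ordinal.lift.{u} (ordOf.{0} r) := by
  unfold ordOf
  rw [lift_list_sum, List.map_map]
  apply congrArg List.sum
  apply List.map_congr_left
  intro i _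
  simp [Function.comp, Ordinal.lift_mul, lift_pow, Ordinal.lift_omega0, Ordinal.lift_natCast]


/-- Along any branch `ξs 0, ξs 1, …, ξs L` of a decomposition forest (the root
being produced by cleaning, each step by decomposition), the sequence of
ordinal ranks is a strictly descending sequence of ordinals below `ω^{d+1}`
that is `(g(size ξ₀), h)`-controlled, and consequently (by the length function
theorem) the branch has length at most `h_{ω^{d+1}}(g(size ξ₀))`, the latter
value of the Cichoń hierarchy being expressed through any `C` satisfying its
defining equations, with `ω^{d+1}` represented by the coefficient list
`replicate (d+1) 0 ++ [1]`. -/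
theorem stmt19 {K : Type} {d : ℕ} (size : K → ℕ) (rank : K → Fin (d + 1) → ℕ)
    (hNsize : ∀ ξ : K, max d (Finset.univ.sup fun i => rank ξ i) ≤ size ξ)
    (n₀ : ℕ)  -- the size of the initial KLM sequence ξ₀
    (L : ℕ) (ξs : Fin (L + 1) → K)
    (hroot : size (ξs 0) ≤ gClean n₀)
    (hstep : ∀ j : Fin L, size (ξs j.succ) ≤ hDec (size (ξs j.castSucc)))
    (hdec : ∀ j : Fin L, LexLt (rank (ξs j.succ)) (rank (ξs j.castSucc)))
    (hbig : d + 1 ≤ gClean n₀)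
    (C : List ℕ → ℕ → ℕ) (hC : CichonEqs hDec C) :
    (∀ j : Fin L,
        ordOf (rank (ξs j.succ)) < ordOf (rank (ξs j.castSucc))) ∧
    (∀ j : Fin (L + 1), ordOf (rank (ξs j)) < Ordinal.omega0 ^ (d + 1)) ∧
    (∀ j : Fin (L + 1),
        max d (Finset.univ.sup fun i => rank (ξs j) i)
          ≤ hDec^[(j : ℕ)] (gClean n₀)) ∧
    L + 1 ≤ C (List.replicate (d + 1) 0 ++ [1]) (gClean n₀) := by
  -- control of sizes
  have ctrl : ∀ (j : ℕ) (hj : j < L + 1), size (ξs ⟨j, hj⟩) ≤ hDec^[j] (gClean n₀) := by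
    intro j
    induction j with
    | zero => intro hj; exact hroot
    | succ j ihj =>
      intro hj
      have hjL : j < L := by omega
      calc size (ξs ⟨j+1, hj⟩) ≤ hDec (size (ξs ⟨j, by omega⟩)) := hstep ⟨j, hjL⟩
      _ ≤ hDec (hDec^[j] (gClean n₀)) := hDec_mono (ihj (by omega))
      _ = hDec^[j+1] (gClean n₀) := (Function.iterate_succ_apply' hDec j _).symm
  have ctrl' : ∀ j : Fin (L + 1),
      max d (Finset.univ.sup fun i => rank (ξs j) i) ≤ hDec^[(j : ℕ)] (gClean n₀) := by
    intro j
    exact le_trans (hNsize _) (ctrl j.1 j.2)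
  have normbd : ∀ (j : Fin (L + 1)), ∀ a ∈ List.ofFn (rank (ξs j)),
      a ≤ hDec^[(j : ℕ)] (gClean n₀) := by
    intro j a ha
    rw [List.mem_ofFn] at ha
    obtain ⟨i, rfl⟩ := ha
    calc rank (ξs j) i ≤ Finset.univ.sup (fun i => rank (ξs j) i) :=
          Finset.le_sup (Finset.mem_univ i)
    _ ≤ max d _ := le_max_right _ _
    _ ≤ _ := ctrl' j
  have normpad : ∀ (j : Fin (L + 1)), ∀ a ∈ List.ofFn (rank (ξs j)) ++ [0],
      a ≤ hDec^[(j : ℕ)] (gClean n₀) := by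
    intro j a ha
    rcases List.mem_append.1 ha with ha2 | ha2
    · exact normbd j a ha2
    · simp at ha2; omega
  have toplval : lval (List.replicate (d + 1) 0 ++ [1]) = Ordinal.omega0 ^ (d + 1) := by
    rw [lval_append_replicate]
    have : lval [1] = 1 := by simp [lval_cons]
    rw [this, mul_one]
  refine ⟨?_, ?_, ?_, ?_⟩
  · intro j
    rw [ordOf_lift (rank (ξs j.succ)), ordOf_lift (rank (ξs j.castSucc)),
      Ordinal.lift_lt, ordOf_eq_lval, ordOf_eq_lval]
    exact lval_lt_of_lexLt (hdec j)
  · intro j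
    have h2 : ordOf.{0} (rank (ξs j)) < Ordinal.omega0.{0} ^ (d + 1) := by
      rw [ordOf_eq_lval]
      have := lval_lt_omega0_pow (List.ofFn (rank (ξs j)))
      simpa using this
    rw [ordOf_lift, show Ordinal.omega0 ^ (d + 1)
        = Ordinal.lift (Ordinal.omega0.{0} ^ (d + 1)) from by
      rw [lift_pow, Ordinal.lift_omega0], Ordinal.lift_lt]
    exact h2
  · exact ctrl'
  · -- length bound
    have chain : ∀ (m j : ℕ) (hjm : j + m = L),
        m ≤ C (List.ofFn (rank (ξs ⟨j, by omega⟩)) ++ [0]) (hDec^[j + 1] (gClean n₀)) := by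
      intro m
      induction m with
      | zero => intro j hj; exact Nat.zero_le _
      | succ m ihm =>
        intro j hj
        have hjL : j < L := by omega
        have ih := ihm (j + 1) (by omega)
        have hk := KEY hC hDec_mono hDec_infl
          (List.ofFn (rank (ξs ⟨j, by omega⟩)) ++ [0])
          (List.ofFn (rank (ξs ⟨j + 1, by omega⟩)) ++ [0])
          (hDec^[j + 1] (gClean n₀))
          (by simp)
          (by
            rw [lval_append_zero, lval_append_zero]
            exact lval_lt_of_lexLt (hdec ⟨j, hjL⟩))
          (normpad ⟨j + 1, by omega⟩)
        rw [← Function.iterate_succ_apply' hDec (j + 1) (gClean n₀)] at hk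
        simp only [Nat.succ_eq_add_one] at hk
        omega
    have chainL := chain L 0 (by omega)
    have hk := KEY hC hDec_mono hDec_infl
      (List.replicate (d + 1) 0 ++ [1])
      (List.ofFn (rank (ξs ⟨0, by omega⟩)) ++ [0])
      (gClean n₀)
      (by simp)
      (by
        rw [lval_append_zero, toplval]
        have := lval_lt_omega0_pow (List.ofFn (rank (ξs ⟨0, by omega⟩)))
        simpa using this)
      (normpad ⟨0, by omega⟩)
    have e1 : hDec^[0 + 1] (gClean n₀) = hDec (gClean n₀) := by
      simp
    rw [e1] at chainL
    omega
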